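/- The HH-component of the curvature of the linearized connection is minus the fibre derivative of the curvature of the nonlinear connection: in local coordinates, Curv(H_i, H_j)e_A = −(∂R^B_{ij}/∂u^A) e_B, where R^B_{ij} = H_j(Γ^B_i) − H_i(Γ^B_j) are the components of the curvature of the nonlinear connection. -/

import Mathlib

noncomputable section

/-- Total space of the (locally trivialized) vector bundle `π : E = ℝⁿ × ℝᵐ → M = ℝⁿ`. -/
abbrev EE (n m : ℕ) := (Fin n → ℝ) × (Fin m → ℝ)

/-- The linearized covariant derivative `D_U s` on the pullback bundle `π*E → E` of the
nonlinear connection with coefficients `Γ` (so `H_i = ∂/∂xⁱ - Γᴬᵢ ∂/∂uᴬ`); for a vector field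
`U` on `E` and a section `s` of `π*E`, `D_U s = fderiv s (U) + Σᵢ Uⁱ (∂Γᵢ/∂u) (s)`. -/
def Dlin {n m : ℕ} (Γ : Fin n → EE n m → (Fin m → ℝ))
    (U : EE n m → EE n m) (s : EE n m → (Fin m → ℝ)) (p : EE n m) : Fin m → ℝ :=
  fderiv ℝ s p (U p) + ∑ i, (U p).1 i • fderiv ℝ (fun u => Γ i (p.1, u)) p.2 (s p)

/-- Vertical lift of a section `η` of `π*E`. -/
def vl {n m : ℕ} (η : EE n m → (Fin m → ℝ)) (p : EE n m) : EE n m := (0, η p)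

/-- Horizontal lift of a vector field `X` along `π` with respect to the nonlinear
connection `Γ`. -/
def hl {n m : ℕ} (Γ : Fin n → EE n m → (Fin m → ℝ)) (X : EE n m → (Fin n → ℝ))
    (p : EE n m) : EE n m := (X p, -(∑ i, X p i • Γ i p))

/-- Lie bracket of vector fields on `E`. -/
def lieBr {n m : ℕ} (U W : EE n m → EE n m) (p : EE n m) : EE n m :=
  fderiv ℝ W p (U p) - fderiv ℝ U p (W p)

/-- Curvature tensor of the linearized connection `D`. -/
def Curv {n m : ℕ} (Γ : Fin n → EE n m → (Fin m → ℝ)) (U W : EE n m → EE n m)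
    (s : EE n m → (Fin m → ℝ)) (p : EE n m) : Fin m → ℝ :=
  Dlin Γ U (Dlin Γ W s) p - Dlin Γ W (Dlin Γ U s) p - Dlin Γ (lieBr U W) s p

/-- Connector (vertical projection) of the nonlinear connection. -/
def kc {n m : ℕ} (Γ : Fin n → EE n m → (Fin m → ℝ)) (W : EE n m → EE n m)
    (p : EE n m) : Fin m → ℝ :=
  (W p).2 + ∑ i, (W p).1 i • Γ i p

/-- The derivative of a function `f` on `E` along the horizontal vector field `H_i`. -/
def hder {n m : ℕ} (Γ : Fin n → EE n m → (Fin m → ℝ)) (i : Fin n)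
    (f : EE n m → (Fin m → ℝ)) (p : EE n m) : Fin m → ℝ :=
  fderiv ℝ f p (Pi.single i 1, -(Γ i p))

/-- Components `R_{ij} = H_j(Γ_i) − H_i(Γ_j)` of the curvature of the nonlinear
connection. -/
def Rnl {n m : ℕ} (Γ : Fin n → EE n m → (Fin m → ℝ)) (i j : Fin n) (p : EE n m) :
    Fin m → ℝ :=
  hder Γ j (Γ i) p - hder Γ i (Γ j) p

section aux

variable {n m : ℕ}

lemma sum_single_smul (i : Fin n) (f : Fin n → Fin m → ℝ) :
    ∑ k, (Pi.single i 1 : Fin n → ℝ) k • f k = f i := by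
  rw [Finset.sum_eq_single i]
  · simp
  · intro k _ hk; simp [Pi.single_eq_of_ne hk]
  · simp

lemma vert_fderiv {f : EE n m → (Fin m → ℝ)} {p : EE n m}
    (hf : DifferentiableAt ℝ f p) (v : Fin m → ℝ) :
    fderiv ℝ (fun u => f (p.1, u)) p.2 v = fderiv ℝ f p (0, v) := by
  have h1 := hasFDerivAt_prodMk_right (𝕜 := ℝ) p.1 p.2
  have h2 : HasFDerivAt f (fderiv ℝ f p) (p.1, p.2) := by
    rw [Prod.mk.eta]; exact hf.hasFDerivAt
  have h3 := (h2.comp p.2 h1).fderiv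
  rw [show (fun u => f (p.1, u)) = f ∘ (fun u : Fin m → ℝ => (p.1, u)) from rfl, h3]
  rfl

end aux

/-- The HH-component of the curvature of the linearized connection is minus
the fibre derivative of the curvature of the nonlinear connection:
`Curv(H_i, H_j)e_A = −(∂R^B_{ij}/∂u^A) e_B`. -/
theorem curvature_HH_is_fibre_derivative_of_R {n m : ℕ}
    (Γ : Fin n → EE n m → (Fin m → ℝ)) (hΓ : ∀ i, ContDiff ℝ (⊤ : ℕ∞) (Γ i))
    (i j : Fin n) (A : Fin m) (p : EE n m) :
    Curv Γ (hl Γ fun _ => Pi.single i 1) (hl Γ fun _ => Pi.single j 1)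
        (fun _ => Pi.single A 1) p
      = -(fderiv ℝ (fun u => Rnl Γ i j (p.1, u)) p.2 (Pi.single A 1)) := by
  classical
  have hd : ∀ k (q : EE n m), DifferentiableAt ℝ (Γ k) q := fun k q =>
    ((hΓ k).differentiable (by simp)).differentiableAt
  have hdf : ∀ k, ContDiff ℝ ((⊤ : ℕ∞) : WithTop ℕ∞) (fderiv ℝ (Γ k)) := fun k =>
    (hΓ k).fderiv_right (by exact_mod_cast le_top)
  have hdd : ∀ k (q : EE n m), DifferentiableAt ℝ (fderiv ℝ (Γ k)) q := fun k q =>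
    ((hdf k).differentiable (by simp)).differentiableAt
  have hsymm : ∀ k (v w : EE n m),
      fderiv ℝ (fderiv ℝ (Γ k)) p v w = fderiv ℝ (fderiv ℝ (Γ k)) p w v := fun k =>
    (hΓ k).contDiffAt.isSymmSndFDerivAt (by
      rw [show ((2 : WithTop ℕ∞)) = ((2 : ℕ∞) : WithTop ℕ∞) from rfl]
      rw [minSmoothness_of_isRCLikeNormedField]; exact_mod_cast le_top)
  set eA : Fin m → ℝ := Pi.single A 1 with heA
  -- the horizontal lifts, pointwise
  have hH : ∀ (l : Fin n) (q : EE n m),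
      hl Γ (fun _ => Pi.single l 1) q = (Pi.single l 1, -(Γ l q)) := by
    intro l q; simp only [hl, sum_single_smul]
  -- derivative of the horizontal lift
  have hHf : ∀ (l : Fin n) (q : EE n m),
      fderiv ℝ (hl Γ fun _ => Pi.single l 1) q
        = ContinuousLinearMap.prod 0 (-(fderiv ℝ (Γ l) q)) := by
    intro l q
    rw [show (hl Γ fun _ => Pi.single l 1)
        = fun q : EE n m => ((Pi.single l 1 : Fin n → ℝ), -(Γ l q)) from funext (hH l)]
    exact (HasFDerivAt.prodMk (hasFDerivAt_const _ _) ((hd l q).hasFDerivAt.neg)).fderiv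
  -- step 1 : inner covariant derivative
  have h1 : ∀ (l : Fin n),
      Dlin Γ (hl Γ fun _ => Pi.single l 1) (fun _ => eA)
        = fun q => fderiv ℝ (Γ l) q (0, eA) := by
    intro l
    funext q
    simp only [Dlin, hH l q, fderiv_fun_const, Pi.zero_apply, ContinuousLinearMap.zero_apply,
      sum_single_smul, zero_add]
    exact vert_fderiv (hd l q) eA
  -- step 2 : outer covariant derivative
  have h2 : ∀ (l l' : Fin n),
      Dlin Γ (hl Γ fun _ => Pi.single l 1) (fun q => fderiv ℝ (Γ l') q (0, eA)) p
        = fderiv ℝ (fderiv ℝ (Γ l')) p (Pi.single l 1, -(Γ l p)) (0, eA)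
          + fderiv ℝ (Γ l) p (0, fderiv ℝ (Γ l') p (0, eA)) := by
    intro l l'
    have hc : fderiv ℝ (fun q => fderiv ℝ (Γ l') q (0, eA)) p
        = (fderiv ℝ (fderiv ℝ (Γ l')) p).flip (0, eA) := by
      rw [fderiv_clm_apply (hdd l' p) (differentiableAt_const _)]
      simp
    have hdiffval : DifferentiableAt ℝ (fun q => fderiv ℝ (Γ l') q (0, eA)) p :=
      (hdd l' p).clm_apply (differentiableAt_const _)
    simp only [Dlin, hH l p, hc, ContinuousLinearMap.flip_apply, sum_single_smul]
    rw [vert_fderiv (hd l p)]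
  -- step 3 : the bracket term vanishes
  have h3 : Dlin Γ (lieBr (hl Γ fun _ => Pi.single i 1) (hl Γ fun _ => Pi.single j 1))
      (fun _ => eA) p = 0 := by
    have hfst : (lieBr (hl Γ fun _ => Pi.single i 1) (hl Γ fun _ => Pi.single j 1) p).1
        = 0 := by
      simp [lieBr, hHf]
    simp [Dlin, hfst]
  -- step 4 : the right-hand side
  have hRdiff : DifferentiableAt ℝ (Rnl Γ i j) p := by
    apply DifferentiableAt.sub
    · exact (hdd i p).clm_apply (DifferentiableAt.prodMk (differentiableAt_const _) (hd j p).fun_neg)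
    · exact (hdd j p).clm_apply (DifferentiableAt.prodMk (differentiableAt_const _) (hd i p).fun_neg)
  have h4 : fderiv ℝ (fun u => Rnl Γ i j (p.1, u)) p.2 eA
      = fderiv ℝ (Rnl Γ i j) p (0, eA) := vert_fderiv hRdiff eA
  have hterm : ∀ (a b : Fin n),
      fderiv ℝ (fun q : EE n m => fderiv ℝ (Γ a) q (Pi.single b 1, -(Γ b q))) p (0, eA)
        = fderiv ℝ (Γ a) p (0, -(fderiv ℝ (Γ b) p (0, eA)))
          + fderiv ℝ (fderiv ℝ (Γ a)) p (0, eA) (Pi.single b 1, -(Γ b p)) := by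
    intro a b
    have hin : fderiv ℝ (fun q : EE n m => ((Pi.single b 1 : Fin n → ℝ), -(Γ b q))) p
        = ContinuousLinearMap.prod 0 (-(fderiv ℝ (Γ b) p)) :=
      (HasFDerivAt.prodMk (hasFDerivAt_const _ _) ((hd b p).hasFDerivAt.neg)).fderiv
    rw [fderiv_clm_apply (hdd a p) (DifferentiableAt.prodMk (differentiableAt_const _) (hd b p).fun_neg), hin]
    simp
  have h5 : fderiv ℝ (Rnl Γ i j) p (0, eA)
      = (fderiv ℝ (Γ i) p (0, -(fderiv ℝ (Γ j) p (0, eA)))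
          + fderiv ℝ (fderiv ℝ (Γ i)) p (0, eA) (Pi.single j 1, -(Γ j p)))
        - (fderiv ℝ (Γ j) p (0, -(fderiv ℝ (Γ i) p (0, eA)))
          + fderiv ℝ (fderiv ℝ (Γ j)) p (0, eA) (Pi.single i 1, -(Γ i p))) := by
    have : Rnl Γ i j = fun q : EE n m =>
        fderiv ℝ (Γ i) q (Pi.single j 1, -(Γ j q))
          - fderiv ℝ (Γ j) q (Pi.single i 1, -(Γ i q)) := rfl
    rw [this, fderiv_fun_sub
      ((hdd i p).clm_apply (DifferentiableAt.prodMk (differentiableAt_const _) (hd j p).fun_neg))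
      ((hdd j p).clm_apply (DifferentiableAt.prodMk (differentiableAt_const _) (hd i p).fun_neg))]
    simp only [ContinuousLinearMap.coe_sub', Pi.sub_apply, hterm]
  -- assemble
  have hC : Curv Γ (hl Γ fun _ => Pi.single i 1) (hl Γ fun _ => Pi.single j 1)
      (fun _ => eA) p
    = (fderiv ℝ (fderiv ℝ (Γ j)) p (Pi.single i 1, -(Γ i p)) (0, eA)
        + fderiv ℝ (Γ i) p (0, fderiv ℝ (Γ j) p (0, eA)))
      - (fderiv ℝ (fderiv ℝ (Γ i)) p (Pi.single j 1, -(Γ j p)) (0, eA)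
        + fderiv ℝ (Γ j) p (0, fderiv ℝ (Γ i) p (0, eA))) - 0 := by
    rw [show Curv Γ (hl Γ fun _ => Pi.single i 1) (hl Γ fun _ => Pi.single j 1)
        (fun _ => eA) p
      = Dlin Γ (hl Γ fun _ => Pi.single i 1)
          (Dlin Γ (hl Γ fun _ => Pi.single j 1) (fun _ => eA)) p
        - Dlin Γ (hl Γ fun _ => Pi.single j 1)
          (Dlin Γ (hl Γ fun _ => Pi.single i 1) (fun _ => eA)) p
        - Dlin Γ (lieBr (hl Γ fun _ => Pi.single i 1) (hl Γ fun _ => Pi.single j 1))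
          (fun _ => eA) p from rfl, h1 i, h1 j, h2 i j, h2 j i, h3]
  rw [hC, h4, h5]
  have hneg : ∀ (a b : Fin n), fderiv ℝ (Γ a) p (0, -(fderiv ℝ (Γ b) p (0, eA)))
      = -(fderiv ℝ (Γ a) p (0, fderiv ℝ (Γ b) p (0, eA))) := by
    intro a b
    rw [show ((0 : Fin n → ℝ), -(fderiv ℝ (Γ b) p (0, eA)))
        = -((0 : Fin n → ℝ), fderiv ℝ (Γ b) p (0, eA)) by simp [Prod.ext_iff]]
    exact (fderiv ℝ (Γ a) p).map_neg _
  rw [hneg i j, hneg j i, hsymm i (0, eA) (Pi.single j 1, -(Γ j p)),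
    hsymm j (0, eA) (Pi.single i 1, -(Γ i p))]
  abel
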